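/- Erdős–Mordell Theorem: For any point M inside (or on the boundary of) a triangle ABC, the sum of distances from M to the vertices A, B, C is at least twice the sum of distances from M to the three sides of the triangle. -/

import Mathlib

open EuclideanGeometry Metric

set_option maxHeartbeats 1000000

private lemma em_dist_eq (x y : EuclideanSpace ℝ (Fin 2)) :
    dist x y = Real.sqrt ((x 0 - y 0)^2 + (x 1 - y 1)^2) := by
  rw [EuclideanSpace.dist_eq, Fin.sum_univ_two, Real.dist_eq, Real.dist_eq, sq_abs, sq_abs]

private lemma em_key (u1 u2 v1 v2 β γ : ℝ) (hβ : 0 ≤ β) (hγ : 0 ≤ γ) :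
    ((v1^2+v2^2)*γ + (u1^2+u2^2)*β) * |u1*v2 - u2*v1| ≤
      Real.sqrt (u1^2+u2^2) * Real.sqrt (v1^2+v2^2) *
      Real.sqrt ((v1-u1)^2+(v2-u2)^2) *
      Real.sqrt ((β*u1+γ*v1)^2+(β*u2+γ*v2)^2) := by
  rw [← Real.sqrt_mul (by positivity), ← Real.sqrt_mul (by positivity),
      ← Real.sqrt_mul (by positivity)]
  rw [Real.le_sqrt (by positivity) (by positivity), mul_pow, sq_abs]
  have hid : (u1^2+u2^2) * (v1^2+v2^2) * ((v1-u1)^2+(v2-u2)^2) *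
        ((β*u1+γ*v1)^2+(β*u2+γ*v2)^2)
      - ((v1^2+v2^2)*γ + (u1^2+u2^2)*β)^2 * (u1*v2 - u2*v1)^2
      = ((u1*v1-u2*v2)*((v1-u1)*(β*u1+γ*v1)-(v2-u2)*(β*u2+γ*v2))
        + (u1*v2+u2*v1)*((v1-u1)*(β*u2+γ*v2)+(v2-u2)*(β*u1+γ*v1)))^2 := by
    ring
  nlinarith [hid, sq_nonneg ((u1*v1-u2*v2)*((v1-u1)*(β*u1+γ*v1)-(v2-u2)*(β*u2+γ*v2))
      + (u1*v2+u2*v1)*((v1-u1)*(β*u2+γ*v2)+(v2-u2)*(β*u1+γ*v1)))]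

private lemma em_foot (w1 w2 m1 m2 t : ℝ) (hL : (0:ℝ) < w1^2+w2^2)
    (htt : t = (m1*w1 + m2*w2)/(w1^2+w2^2)) :
    (m1 - t*w1)^2 + (m2 - t*w2)^2 = (w1*m2 - w2*m1)^2/(w1^2+w2^2) := by
  subst htt; field_simp; ring

private lemma em_infDist_le (B C M : EuclideanSpace ℝ (Fin 2)) (h : B ≠ C) :
    infDist M (affineSpan ℝ ({B, C} : Set (EuclideanSpace ℝ (Fin 2))) : Set _) ≤
      |(C 0 - B 0) * (M 1 - B 1) - (C 1 - B 1) * (M 0 - B 0)| / dist B C := by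
  have hL : (0:ℝ) < (C 0 - B 0)^2 + (C 1 - B 1)^2 := by
    rcases lt_or_eq_of_le (by positivity : (0:ℝ) ≤ (C 0 - B 0)^2 + (C 1 - B 1)^2) with h' | h'
    · exact h'
    · exfalso; apply h
      have h0 : C 0 - B 0 = 0 := by nlinarith [sq_nonneg (C 0 - B 0), sq_nonneg (C 1 - B 1)]
      have h1 : C 1 - B 1 = 0 := by nlinarith [sq_nonneg (C 0 - B 0), sq_nonneg (C 1 - B 1)]
      ext i
      fin_cases i
      · show B 0 = C 0; linarith
      · show B 1 = C 1; linarith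
  set t : ℝ := ((M 0 - B 0)*(C 0 - B 0) + (M 1 - B 1)*(C 1 - B 1)) /
      ((C 0 - B 0)^2 + (C 1 - B 1)^2) with ht
  have hmem : AffineMap.lineMap B C t ∈
      (affineSpan ℝ ({B, C} : Set (EuclideanSpace ℝ (Fin 2))) : Set _) :=
    AffineMap.lineMap_mem_affineSpan_pair t B C
  refine le_trans (infDist_le_dist_of_mem hmem) ?_
  have hfoot : ∀ i : Fin 2, (AffineMap.lineMap B C t : EuclideanSpace ℝ (Fin 2)) i
      = B i + t * (C i - B i) := by
    intro i
    simp [AffineMap.lineMap_apply, PiLp.add_apply, PiLp.smul_apply, PiLp.sub_apply,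
      smul_eq_mul]
    ring
  have hBC : dist B C = Real.sqrt ((C 0 - B 0)^2 + (C 1 - B 1)^2) := by
    rw [em_dist_eq]; congr 1; ring
  rw [em_dist_eq, hfoot 0, hfoot 1, hBC]
  have habs : |(C 0 - B 0) * (M 1 - B 1) - (C 1 - B 1) * (M 0 - B 0)| /
      Real.sqrt ((C 0 - B 0)^2 + (C 1 - B 1)^2)
      = Real.sqrt (((C 0 - B 0) * (M 1 - B 1) - (C 1 - B 1) * (M 0 - B 0))^2 /
          ((C 0 - B 0)^2 + (C 1 - B 1)^2)) := by
    rw [Real.sqrt_div (by positivity), Real.sqrt_sq_eq_abs]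
  rw [habs]
  have hE : (M 0 - (B 0 + t * (C 0 - B 0)))^2 + (M 1 - (B 1 + t * (C 1 - B 1)))^2
      = ((C 0 - B 0) * (M 1 - B 1) - (C 1 - B 1) * (M 0 - B 0))^2 /
          ((C 0 - B 0)^2 + (C 1 - B 1)^2) := by
    rw [← em_foot (C 0 - B 0) (C 1 - B 1) (M 0 - B 0) (M 1 - B 1) t hL ht]
    ring
  rw [hE]

private lemma em_final (a b c x y z K α β γ : ℝ) (ha : 0 < a) (hb : 0 < b) (hc : 0 < c)
    (hα : 0 ≤ α) (hβ : 0 ≤ β) (hγ : 0 ≤ γ) (hK : 0 ≤ K)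
    (h1 : (b^2*γ + c^2*β)*K ≤ c*b*a*x)
    (h2 : (c^2*α + a^2*γ)*K ≤ a*c*b*y)
    (h3 : (a^2*β + b^2*α)*K ≤ b*a*c*z) :
    2*(α*K/a + β*K/b + γ*K/c) ≤ x + y + z := by
  have e : α*K/a + β*K/b + γ*K/c = (α*K*b*c + β*K*a*c + γ*K*a*b)/(a*b*c) := by
    field_simp
  rw [e, ← mul_div_assoc, div_le_iff₀ (by positivity)]
  nlinarith [mul_nonneg (mul_nonneg hα hK) (sq_nonneg (b-c)),
    mul_nonneg (mul_nonneg hβ hK) (sq_nonneg (a-c)),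
    mul_nonneg (mul_nonneg hγ hK) (sq_nonneg (a-b))]

theorem erdos_mordell
    (A B C M : EuclideanSpace ℝ (Fin 2))
    (hABC : AffineIndependent ℝ ![A, B, C])
    (hM : M ∈ convexHull ℝ ({A, B, C} : Set (EuclideanSpace ℝ (Fin 2)))) :
    dist M A + dist M B + dist M C ≥
      2 * (infDist M (affineSpan ℝ ({B, C} : Set (EuclideanSpace ℝ (Fin 2))) : Set _) +
           infDist M (affineSpan ℝ ({C, A} : Set (EuclideanSpace ℝ (Fin 2))) : Set _) +
           infDist M (affineSpan ℝ ({A, B} : Set (EuclideanSpace ℝ (Fin 2))) : Set _)) := by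
  have hinj := hABC.injective
  have hAB : A ≠ B := fun h =>
    absurd (hinj (show ![A,B,C] 0 = ![A,B,C] 1 by simp [h])) (by decide)
  have hBC : B ≠ C := fun h =>
    absurd (hinj (show ![A,B,C] 1 = ![A,B,C] 2 by simp [h])) (by decide)
  have hCA : C ≠ A := fun h =>
    absurd (hinj (show ![A,B,C] 2 = ![A,B,C] 0 by simp [h])) (by decide)
  -- convex hull decomposition
  rw [show ({A, B, C} : Set (EuclideanSpace ℝ (Fin 2))) = insert A {B, C} from rfl,
      convexHull_insert ⟨B, by simp⟩, mem_convexJoin] at hM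
  obtain ⟨a', ha', z, hz, hMz⟩ := hM
  rw [Set.mem_singleton_iff] at ha'
  rw [ha'] at hMz
  rw [convexHull_pair] at hz
  obtain ⟨s, s', hs, hs', hss, rfl⟩ := hz
  obtain ⟨θ, θ', hθ, hθ', hθθ, hMeq⟩ := hMz
  have hβ : (0:ℝ) ≤ θ'*s := mul_nonneg hθ' hs
  have hγ : (0:ℝ) ≤ θ'*s' := mul_nonneg hθ' hs'
  have hsum : θ + θ'*s + θ'*s' = 1 := by linear_combination θ'*hss + hθθ
  have hMc : ∀ i : Fin 2, M i = θ*A i + (θ'*s)*B i + (θ'*s')*C i := by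
    intro i
    have h := congrFun (congrArg WithLp.ofLp hMeq) i
    simp only [PiLp.add_apply, PiLp.smul_apply, smul_eq_mul] at h
    linear_combination -h
  have hmA : ∀ i : Fin 2, M i - A i = (θ'*s)*(B i - A i) + (θ'*s')*(C i - A i) := by
    intro i; linear_combination hMc i + A i * hsum
  have hmB : ∀ i : Fin 2, M i - B i = θ*(A i - B i) + (θ'*s')*(C i - B i) := by
    intro i; linear_combination hMc i + B i * hsum
  have hmC : ∀ i : Fin 2, M i - C i = θ*(A i - C i) + (θ'*s)*(B i - C i) := by
    intro i; linear_combination hMc i + C i * hsum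
  -- triangle is nondegenerate
  have hD : (B 0 - A 0)*(C 1 - A 1) - (B 1 - A 1)*(C 0 - A 0) ≠ 0 := by
    intro h0
    rw [affineIndependent_iff_not_collinear] at hABC
    apply hABC
    rw [collinear_iff_exists_forall_eq_smul_vadd]
    by_cases hBA : B = A
    · refine ⟨A, C - A, ?_⟩
      rintro p ⟨j, rfl⟩
      fin_cases j
      · exact ⟨0, by simp⟩
      · exact ⟨0, by simp [hBA]⟩
      · exact ⟨1, by simp⟩
    · have hu : (0:ℝ) < (B 0 - A 0)^2 + (B 1 - A 1)^2 := by
        rcases lt_or_eq_of_le (by positivity : (0:ℝ) ≤ (B 0 - A 0)^2 + (B 1 - A 1)^2) with h' | h'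
        · exact h'
        · exfalso; apply hBA
          have e0 : B 0 - A 0 = 0 := by nlinarith [sq_nonneg (B 0 - A 0), sq_nonneg (B 1 - A 1)]
          have e1 : B 1 - A 1 = 0 := by nlinarith [sq_nonneg (B 0 - A 0), sq_nonneg (B 1 - A 1)]
          ext i; fin_cases i
          · show B 0 = A 0; linarith
          · show B 1 = A 1; linarith
      refine ⟨A, B - A, ?_⟩
      rintro p ⟨j, rfl⟩
      fin_cases j
      · exact ⟨0, by simp⟩
      · exact ⟨1, by simp⟩
      · refine ⟨((C 0 - A 0)*(B 0 - A 0) + (C 1 - A 1)*(B 1 - A 1))/((B 0 - A 0)^2 + (B 1 - A 1)^2), ?_⟩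
        show C = _ • (B - A) +ᵥ A
        ext i; fin_cases i
        · show C 0 = (_ • (B - A) +ᵥ A) 0
          simp only [vadd_eq_add, PiLp.add_apply, PiLp.smul_apply, PiLp.sub_apply, smul_eq_mul]
          field_simp
          linear_combination (-(B 1 - A 1)) * h0
        · show C 1 = (_ • (B - A) +ᵥ A) 1
          simp only [vadd_eq_add, PiLp.add_apply, PiLp.smul_apply, PiLp.sub_apply, smul_eq_mul]
          field_simp
          linear_combination (B 0 - A 0) * h0
  -- side length and vertex distance formulas
  have eAB : Real.sqrt ((B 0 - A 0)^2+(B 1 - A 1)^2) = dist A B := by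
    rw [em_dist_eq]; congr 1; ring
  have eCA : Real.sqrt ((C 0 - A 0)^2+(C 1 - A 1)^2) = dist C A := (em_dist_eq C A).symm
  have eA3 : Real.sqrt (((C 0 - A 0) - (B 0 - A 0))^2 + ((C 1 - A 1) - (B 1 - A 1))^2)
      = dist B C := by rw [em_dist_eq]; congr 1; ring
  have eBC : Real.sqrt ((C 0 - B 0)^2+(C 1 - B 1)^2) = dist B C := by
    rw [em_dist_eq]; congr 1; ring
  have eAB2 : Real.sqrt ((A 0 - B 0)^2+(A 1 - B 1)^2) = dist A B := (em_dist_eq A B).symm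
  have eB3 : Real.sqrt (((A 0 - B 0) - (C 0 - B 0))^2 + ((A 1 - B 1) - (C 1 - B 1))^2)
      = dist C A := by rw [em_dist_eq]; congr 1; ring
  have eAC : Real.sqrt ((A 0 - C 0)^2+(A 1 - C 1)^2) = dist C A := by
    rw [em_dist_eq]; congr 1; ring
  have eBC2 : Real.sqrt ((B 0 - C 0)^2+(B 1 - C 1)^2) = dist B C := (em_dist_eq B C).symm
  have eC3 : Real.sqrt (((B 0 - C 0) - (A 0 - C 0))^2 + ((B 1 - C 1) - (A 1 - C 1))^2)
      = dist A B := by rw [em_dist_eq]; congr 1; ring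
  have ex : dist M A = Real.sqrt (((θ'*s)*(B 0 - A 0)+(θ'*s')*(C 0 - A 0))^2
      + ((θ'*s)*(B 1 - A 1)+(θ'*s')*(C 1 - A 1))^2) := by
    rw [em_dist_eq]; congr 1; rw [hmA 0, hmA 1]
  have ey : dist M B = Real.sqrt (((θ'*s')*(C 0 - B 0)+θ*(A 0 - B 0))^2
      + ((θ'*s')*(C 1 - B 1)+θ*(A 1 - B 1))^2) := by
    have h2 : (M 0 - B 0)^2+(M 1 - B 1)^2 = ((θ'*s')*(C 0 - B 0)+θ*(A 0 - B 0))^2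
        + ((θ'*s')*(C 1 - B 1)+θ*(A 1 - B 1))^2 := by rw [hmB 0, hmB 1]; ring
    rw [em_dist_eq, h2]
  have ez : dist M C = Real.sqrt ((θ*(A 0 - C 0)+(θ'*s)*(B 0 - C 0))^2
      + (θ*(A 1 - C 1)+(θ'*s)*(B 1 - C 1))^2) := by
    rw [em_dist_eq]; congr 1; rw [hmC 0, hmC 1]
  have sqAB : (dist A B)^2 = (B 0 - A 0)^2+(B 1 - A 1)^2 := by
    rw [← eAB, Real.sq_sqrt (by positivity)]
  have sqCA : (dist C A)^2 = (C 0 - A 0)^2+(C 1 - A 1)^2 := by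
    rw [← eCA, Real.sq_sqrt (by positivity)]
  have sqBC : (dist B C)^2 = (C 0 - B 0)^2+(C 1 - B 1)^2 := by
    rw [← eBC, Real.sq_sqrt (by positivity)]
  have sqAB' : (dist A B)^2 = (A 0 - B 0)^2+(A 1 - B 1)^2 := by
    rw [← eAB2, Real.sq_sqrt (by positivity)]
  have sqCA' : (dist C A)^2 = (A 0 - C 0)^2+(A 1 - C 1)^2 := by
    rw [← eAC, Real.sq_sqrt (by positivity)]
  have sqBC' : (dist B C)^2 = (B 0 - C 0)^2+(B 1 - C 1)^2 := by
    rw [← eBC2, Real.sq_sqrt (by positivity)]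
  -- key inequalities
  have KA := em_key (B 0 - A 0) (B 1 - A 1) (C 0 - A 0) (C 1 - A 1) (θ'*s) (θ'*s') hβ hγ
  rw [eAB, eCA, eA3, ← ex, ← sqAB, ← sqCA] at KA
  have KB := em_key (C 0 - B 0) (C 1 - B 1) (A 0 - B 0) (A 1 - B 1) (θ'*s') θ hγ hθ
  rw [eBC, eAB2, eB3, ← ey, ← sqBC, ← sqAB',
    show (C 0 - B 0)*(A 1 - B 1) - (C 1 - B 1)*(A 0 - B 0)
      = (B 0 - A 0)*(C 1 - A 1) - (B 1 - A 1)*(C 0 - A 0) from by ring] at KB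
  have KC := em_key (A 0 - C 0) (A 1 - C 1) (B 0 - C 0) (B 1 - C 1) θ (θ'*s) hθ hβ
  rw [eAC, eBC2, eC3, ← ez, ← sqCA', ← sqBC',
    show (A 0 - C 0)*(B 1 - C 1) - (A 1 - C 1)*(B 0 - C 0)
      = (B 0 - A 0)*(C 1 - A 1) - (B 1 - A 1)*(C 0 - A 0) from by ring] at KC
  -- infDist bounds
  have i1 := em_infDist_le B C M hBC
  rw [show (C 0 - B 0) * (M 1 - B 1) - (C 1 - B 1) * (M 0 - B 0)
      = θ * ((B 0 - A 0)*(C 1 - A 1) - (B 1 - A 1)*(C 0 - A 0)) from by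
        rw [show M 1 - B 1 = θ*(A 1 - B 1) + (θ'*s')*(C 1 - B 1) from hmB 1,
            show M 0 - B 0 = θ*(A 0 - B 0) + (θ'*s')*(C 0 - B 0) from hmB 0]; ring,
    abs_mul, abs_of_nonneg hθ] at i1
  have i2 := em_infDist_le C A M hCA
  rw [show (A 0 - C 0) * (M 1 - C 1) - (A 1 - C 1) * (M 0 - C 0)
      = (θ'*s) * ((B 0 - A 0)*(C 1 - A 1) - (B 1 - A 1)*(C 0 - A 0)) from by
        rw [show M 1 - C 1 = θ*(A 1 - C 1) + (θ'*s)*(B 1 - C 1) from hmC 1,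
            show M 0 - C 0 = θ*(A 0 - C 0) + (θ'*s)*(B 0 - C 0) from hmC 0]; ring,
    abs_mul, abs_of_nonneg hβ] at i2
  have i3 := em_infDist_le A B M hAB
  rw [show (B 0 - A 0) * (M 1 - A 1) - (B 1 - A 1) * (M 0 - A 0)
      = (θ'*s') * ((B 0 - A 0)*(C 1 - A 1) - (B 1 - A 1)*(C 0 - A 0)) from by
        rw [show M 1 - A 1 = (θ'*s)*(B 1 - A 1) + (θ'*s')*(C 1 - A 1) from hmA 1,
            show M 0 - A 0 = (θ'*s)*(B 0 - A 0) + (θ'*s')*(C 0 - A 0) from hmA 0]; ring,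
    abs_mul, abs_of_nonneg hγ] at i3
  have hfin := em_final (dist B C) (dist C A) (dist A B) (dist M A) (dist M B) (dist M C)
      (|(B 0 - A 0)*(C 1 - A 1) - (B 1 - A 1)*(C 0 - A 0)|) θ (θ'*s) (θ'*s')
      (dist_pos.mpr hBC) (dist_pos.mpr hCA) (dist_pos.mpr hAB)
      hθ hβ hγ (abs_nonneg _) KA KB KC
  linarith [i1, i2, i3, hfin]
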